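/- Let θ0, θ0′ be real numbers, let D, D′ ⊆ ℝ with θ0 ∉ D and θ0′ ∉ D′, and let (α, β) and (α′, β′) be two pairs of real functions such that α(θ) ≠ α(θ0) on D, α′(θ) ≠ α′(θ0′) on D′, and both maps θ ↦ (β(θ) − β(θ0))/(α(θ) − α(θ0)) on D and θ ↦ (β′(θ) − β′(θ0′))/(α′(θ) − α′(θ0′)) on D′ are strictly monotone increasing. Let g₁, …, g_T be real numbers. For 0 ≤ τ < T let θ₁^{τ} ∈ D satisfy [α(θ₁^{τ}) − α(θ0)] · Σ_{t=τ+1}^{T} g_t − [β(θ₁^{τ}) − β(θ0)] · (T − τ) = 0, and let ψ₁^{τ} ∈ D′ satisfy [α′(ψ₁^{τ}) − α′(θ0′)] · Σ_{t=τ+1}^{T} g_t − [β′(ψ₁^{τ}) − β′(θ0′)] · (T − τ) = 0. Then for all 0 ≤ τ_i < τ_j < T, the sign of θ₁^{τ_i} − θ₁^{τ_j} equals the sign of ψ₁^{τ_i} − ψ₁^{τ_j}. -/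

import Mathlib

open Finset

lemma ratio_root_aux (a a0 b b0 S c : ℝ) (ha : a - a0 ≠ 0) (hc : c ≠ 0)
    (h : (a - a0) * S - (b - b0) * c = 0) : (b - b0) / (a - a0) = S / c := by
  field_simp
  linarith [h]

theorem focus_same_pruning_across_exponential_families
    (θ0 θ0' : ℝ) (D D' : Set ℝ) (hθ0 : θ0 ∉ D) (hθ0' : θ0' ∉ D')
    (α β α' β' : ℝ → ℝ)
    (hα : ∀ θ ∈ D, α θ ≠ α θ0)
    (hα' : ∀ θ ∈ D', α' θ ≠ α' θ0')
    (hmono : StrictMonoOn (fun θ => (β θ - β θ0) / (α θ - α θ0)) D)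
    (hmono' : StrictMonoOn (fun θ => (β' θ - β' θ0') / (α' θ - α' θ0')) D')
    (T : ℕ) (g : ℕ → ℝ)
    (θ1 ψ1 : ℕ → ℝ)
    (hθ1mem : ∀ τ < T, θ1 τ ∈ D)
    (hψ1mem : ∀ τ < T, ψ1 τ ∈ D')
    (hθ1root : ∀ τ < T, (α (θ1 τ) - α θ0) * (∑ t ∈ Finset.Ioc τ T, g t)
        - (β (θ1 τ) - β θ0) * ((T : ℝ) - τ) = 0)
    (hψ1root : ∀ τ < T, (α' (ψ1 τ) - α' θ0') * (∑ t ∈ Finset.Ioc τ T, g t)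
        - (β' (ψ1 τ) - β' θ0') * ((T : ℝ) - τ) = 0) :
    ∀ τi τj : ℕ, τi < τj → τj < T →
      ((θ1 τi > θ1 τj ↔ ψ1 τi > ψ1 τj) ∧
       (θ1 τi = θ1 τj ↔ ψ1 τi = ψ1 τj) ∧
       (θ1 τi < θ1 τj ↔ ψ1 τi < ψ1 τj)) := by
  intro τi τj hij hjT
  have hiT : τi < T := hij.trans hjT
  have hci : ((T : ℝ) - τi) ≠ 0 := by
    have : (τi : ℝ) < T := by exact_mod_cast hiT
    linarith
  have hcj : ((T : ℝ) - τj) ≠ 0 := by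
    have : (τj : ℝ) < T := by exact_mod_cast hjT
    linarith
  have keyi : (β (θ1 τi) - β θ0) / (α (θ1 τi) - α θ0)
      = (∑ t ∈ Finset.Ioc τi T, g t) / ((T : ℝ) - τi) :=
    ratio_root_aux _ _ _ _ _ _ (sub_ne_zero.mpr (hα _ (hθ1mem _ hiT))) hci (hθ1root _ hiT)
  have keyj : (β (θ1 τj) - β θ0) / (α (θ1 τj) - α θ0)
      = (∑ t ∈ Finset.Ioc τj T, g t) / ((T : ℝ) - τj) :=
    ratio_root_aux _ _ _ _ _ _ (sub_ne_zero.mpr (hα _ (hθ1mem _ hjT))) hcj (hθ1root _ hjT)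
  have keyi' : (β' (ψ1 τi) - β' θ0') / (α' (ψ1 τi) - α' θ0')
      = (∑ t ∈ Finset.Ioc τi T, g t) / ((T : ℝ) - τi) :=
    ratio_root_aux _ _ _ _ _ _ (sub_ne_zero.mpr (hα' _ (hψ1mem _ hiT))) hci (hψ1root _ hiT)
  have keyj' : (β' (ψ1 τj) - β' θ0') / (α' (ψ1 τj) - α' θ0')
      = (∑ t ∈ Finset.Ioc τj T, g t) / ((T : ℝ) - τj) :=
    ratio_root_aux _ _ _ _ _ _ (sub_ne_zero.mpr (hα' _ (hψ1mem _ hjT))) hcj (hψ1root _ hjT)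
  have h1 : θ1 τj < θ1 τi ↔ ψ1 τj < ψ1 τi := by
    rw [← hmono.lt_iff_lt (hθ1mem _ hjT) (hθ1mem _ hiT),
        ← hmono'.lt_iff_lt (hψ1mem _ hjT) (hψ1mem _ hiT)]
    simp only [keyi, keyj, keyi', keyj']
  have h3 : θ1 τi < θ1 τj ↔ ψ1 τi < ψ1 τj := by
    rw [← hmono.lt_iff_lt (hθ1mem _ hiT) (hθ1mem _ hjT),
        ← hmono'.lt_iff_lt (hψ1mem _ hiT) (hψ1mem _ hjT)]
    simp only [keyi, keyj, keyi', keyj']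
  refine ⟨h1, ?_, h3⟩
  constructor
  · intro h
    rcases lt_trichotomy (ψ1 τi) (ψ1 τj) with h' | h' | h'
    · exact absurd (h3.mpr h') (by rw [h]; exact lt_irrefl _)
    · exact h'
    · exact absurd (h1.mpr h') (by rw [h]; exact lt_irrefl _)
  · intro h
    rcases lt_trichotomy (θ1 τi) (θ1 τj) with h' | h' | h'
    · exact absurd (h3.mp h') (by rw [h]; exact lt_irrefl _)
    · exact h'
    · exact absurd (h1.mp h') (by rw [h]; exact lt_irrefl _)
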